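/- Let A be a unital C*-algebra and a ∈ A with Im a strictly positive. Then a is invertible, Im(a^{-1}) = −a^{-1}·(Im a)·(a*)^{-1}, and −Im(a^{-1}) is strictly positive. In particular, every element of the operator upper half-plane ℍ⁺(A) is invertible. -/

import Mathlib

noncomputable section

/-- The imaginary part `Im a = (a - a*)/(2i)` of an element of a complex star algebra. -/
def aIm {A : Type*} [NonUnitalRing A] [StarRing A] [Module ℂ A] (a : A) : A :=
  ((2 * Complex.I)⁻¹ : ℂ) • (a - star a)

/-- `k > 0`: `k` is selfadjoint, nonnegative and invertible. -/
def StrictlyPos {A : Type*} [Ring A] [StarRing A] [PartialOrder A] (k : A) : Prop :=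
  IsSelfAdjoint k ∧ 0 ≤ k ∧ IsUnit k

private lemma aux_isUnit {A : Type*} [CStarAlgebra A] [PartialOrder A] [StarOrderedRing A]
    (a : A) (ha : StrictlyPos (aIm a)) : IsUnit a := by
  obtain ⟨hsa, hnn, huB⟩ := ha
  set b := aIm a with hbdef
  have h2I : (2 * Complex.I) ≠ 0 := by simp [Complex.I_ne_zero]
  have hstar : star a = a - ((2 * Complex.I) : ℂ) • b := by
    rw [hbdef]
    unfold aIm
    rw [smul_smul, mul_inv_cancel₀ h2I, one_smul, sub_sub_cancel]
  -- the inverse of b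
  set binv : A := Ring.inverse b with hbinv
  have hbb : b * binv = 1 := Ring.mul_inverse_cancel b huB
  have hbb' : binv * b = 1 := Ring.inverse_mul_cancel b huB
  have hbinv_sa : star binv = binv := by
    rw [hbinv, ← Ring.inverse_star, hsa.star_eq]
  have hbinv_nn : 0 ≤ binv := by
    have := star_left_conjugate_nonneg hnn binv
    rwa [hbinv_sa, hbb', one_mul] at this
  have e1 : ∀ y : A, binv * (b * y) = y := fun y => by rw [← mul_assoc, hbb', one_mul]
  have e2 : ∀ y : A, b * (binv * y) = y := fun y => by rw [← mul_assoc, hbb, one_mul]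
  -- h = selfadjoint part candidate
  set h : A := a - (Complex.I : ℂ) • b with hh
  have hIb : star a = h - (Complex.I : ℂ) • b := by
    rw [hstar, hh, sub_sub, ← add_smul, two_mul]
  -- key identity : a * binv * star a = b + h * binv * h
  have key1 : a * binv * star a = b + h * binv * h := by
    rw [hIb, hh]
    simp only [mul_sub, sub_mul, smul_mul_assoc, mul_smul_comm, smul_smul, smul_sub, mul_assoc,
      e1, e2, hbb, hbb', mul_one, one_mul, Complex.I_mul_I, neg_smul, one_smul]
    module
  have key2 : star a * binv * a = b + h * binv * h := by
    rw [hIb, hh]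
    simp only [mul_sub, sub_mul, smul_mul_assoc, mul_smul_comm, smul_smul, smul_sub, mul_assoc,
      e1, e2, hbb, hbb', mul_one, one_mul, Complex.I_mul_I, neg_smul, one_smul]
    module
  have hh_sa : star h = h := by
    rw [hh, star_sub, star_smul, hsa.star_eq, hstar]
    simp only [Complex.star_def, Complex.conj_I]
    rw [neg_smul, sub_neg_eq_add, sub_add, ← sub_smul]
    congr 2
    ring
  have hhh_nn : 0 ≤ h * binv * h := by
    have := star_right_conjugate_nonneg hbinv_nn h
    rwa [hh_sa] at this
  have hle : b ≤ a * binv * star a := by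
    rw [key1]
    exact le_add_of_nonneg_right hhh_nn
  have hxU : IsUnit (a * binv * star a) := CStarAlgebra.isUnit_of_le b hle (huB.isStrictlyPositive hnn)
  have hay : a * (binv * star a * Ring.inverse (a * binv * star a)) = 1 := by
    rw [← mul_assoc, ← mul_assoc, Ring.mul_inverse_cancel _ hxU]
  have hk12 : star a * binv * a = a * binv * star a := by rw [key1, key2]
  have hza : Ring.inverse (a * binv * star a) * (star a * binv) * a = 1 := by
    rw [mul_assoc (Ring.inverse (a * binv * star a)) (star a * binv) a, hk12,
      Ring.inverse_mul_cancel _ hxU]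
  set y : A := binv * star a * Ring.inverse (a * binv * star a) with hy
  set z : A := Ring.inverse (a * binv * star a) * (star a * binv) with hz
  have hyz : y = z := by
    calc y = (z * a) * y := by rw [hza, one_mul]
    _ = z * (a * y) := by rw [mul_assoc]
    _ = z := by rw [hay, mul_one]
  exact ⟨⟨a, y, hay, hyz ▸ hza⟩, rfl⟩

/-- If `Im a > 0` in a unital C*-algebra, then `a` is invertible,
`Im(a⁻¹) = -a⁻¹·(Im a)·(a*)⁻¹` and `-Im(a⁻¹) > 0`; in particular every element of the
operator upper half-plane is invertible. -/
theorem stmt_15 {A : Type*} [CStarAlgebra A] [PartialOrder A] [StarOrderedRing A]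
    (a : A) (ha : StrictlyPos (aIm a)) :
    IsUnit a ∧
    aIm (Ring.inverse a) = -(Ring.inverse a * aIm a * Ring.inverse (star a)) ∧
    StrictlyPos (-(aIm (Ring.inverse a))) ∧
    (∀ c : A, StrictlyPos (aIm c) → IsUnit c) := by
  obtain ⟨hsa, hnn, huB⟩ := ha
  have hu : IsUnit a := aux_isUnit a ⟨hsa, hnn, huB⟩
  set ai : A := Ring.inverse a with hai
  have h1 : a * ai = 1 := Ring.mul_inverse_cancel a hu
  have h2 : ai * a = 1 := Ring.inverse_mul_cancel a hu
  have hsinv : Ring.inverse (star a) = star ai := Ring.inverse_star a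
  have h3 : star a * star ai = 1 := by rw [← star_mul, h2, star_one]
  have h4 : star ai * star a = 1 := by rw [← star_mul, h1, star_one]
  have key : aIm ai = -(ai * aIm a * Ring.inverse (star a)) := by
    rw [hsinv]
    unfold aIm
    rw [mul_smul_comm, smul_mul_assoc, ← smul_neg]
    congr 1
    rw [mul_sub, sub_mul, mul_assoc ai (star a) (star ai), h3, mul_one, h2, one_mul, neg_sub]
  refine ⟨hu, key, ?_, fun c hc => aux_isUnit c hc⟩
  have keyval : -(aIm ai) = ai * aIm a * star ai := by
    rw [key, hsinv, neg_neg]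
  refine ⟨?_, ?_, ?_⟩
  · rw [keyval]
    unfold IsSelfAdjoint
    rw [star_mul, star_mul, star_star, hsa.star_eq, mul_assoc]
  · rw [keyval]
    exact star_right_conjugate_nonneg hnn ai
  · rw [keyval]
    have huai : IsUnit ai := ⟨⟨ai, a, h2, h1⟩, rfl⟩
    exact (huai.mul huB).mul huai.star
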